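/- arXiv:1310.4987 — 6 statements merged into one kernel-verified Lean document; each statement's English description precedes it below -/
import Mathlib

section
/- Suppose A ⊇ B ⊇ C is a tower of rings, E : A → B is a B-B-bimodule projection splitting the extension A ⊇ B (i.e., E(1)=1 and E is B-linear on both sides), and the multiplication map μ : B ⊗_C A → A splits as a B-A-bimodule epimorphism. Then B ⊇ C is a separable extension. -/
/-!  A noncommutative relative tensor product `L ⊗_C R` for a ring `C` mapping
into rings `L` (acting on the right through `f`) and `R` (acting on the left
through `g`), together with the outer left `L`-action `lact`, the outer right
`R`-action `ract`, a lifting principle for balanced biadditive maps, and the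
multiplication map. -/

open scoped TensorProduct

noncomputable section
namespace NCT

variable {C L R : Type*} [Ring C] [Ring L] [Ring R]

/-- The submodule of relations `(l * f c) ⊗ r - l ⊗ (g c * r)`. -/
def rel (f : C →+* L) (g : C →+* R) : Submodule ℤ (L ⊗[ℤ] R) :=
  Submodule.span ℤ
    {x | ∃ (l : L) (c : C) (r : R), x = (l * f c) ⊗ₜ[ℤ] r - l ⊗ₜ[ℤ] (g c * r)}

/-- The relative tensor product `L ⊗_C R`. -/
def Tens (f : C →+* L) (g : C →+* R) : Type _ := (L ⊗[ℤ] R) ⧸ rel f g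

instance (f : C →+* L) (g : C →+* R) : AddCommGroup (Tens f g) :=
  inferInstanceAs (AddCommGroup ((L ⊗[ℤ] R) ⧸ rel f g))

variable (f : C →+* L) (g : C →+* R)

/-- The canonical image of `l ⊗ r` in `L ⊗_C R`. -/
def tmul (l : L) (r : R) : Tens f g := Submodule.Quotient.mk (l ⊗ₜ[ℤ] r)

lemma tmul_rel (l : L) (c : C) (r : R) :
    tmul f g (l * f c) r = tmul f g l (g c * r) := by
  refine (Submodule.Quotient.eq _).2 ?_
  exact Submodule.subset_span ⟨l, c, r, rfl⟩

lemma tmul_add_left (l l' : L) (r : R) :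
    tmul f g (l + l') r = tmul f g l r + tmul f g l' r := by
  show Submodule.Quotient.mk _ = _
  rw [TensorProduct.add_tmul, Submodule.Quotient.mk_add]; rfl

lemma tmul_add_right (l : L) (r r' : R) :
    tmul f g l (r + r') = tmul f g l r + tmul f g l r' := by
  show Submodule.Quotient.mk _ = _
  rw [TensorProduct.tmul_add, Submodule.Quotient.mk_add]; rfl

/-- Package a biadditive map as a bundled `AddMonoidHom`-valued hom. -/
def mkBilin {M N P : Type*} [AddCommGroup M] [AddCommGroup N] [AddCommGroup P]
    (φ : M → N → P)
    (h1 : ∀ m m' n, φ (m + m') n = φ m n + φ m' n)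
    (h2 : ∀ m n n', φ m (n + n') = φ m n + φ m n') : M →+ N →+ P :=
  AddMonoidHom.mk' (fun m => AddMonoidHom.mk' (φ m) (h2 m))
    (fun m m' => by ext n; exact h1 m m' n)

@[simp] lemma mkBilin_apply {M N P : Type*} [AddCommGroup M] [AddCommGroup N] [AddCommGroup P]
    (φ : M → N → P) (h1 h2) (m : M) (n : N) : mkBilin φ h1 h2 m n = φ m n := rfl

/-- Lift a balanced biadditive map to the relative tensor product. -/
def lift {P : Type*} [AddCommGroup P] (φ : L →+ R →+ P)
    (hbal : ∀ l c r, φ (l * f c) r = φ l (g c * r)) : Tens f g →+ P :=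
  (Submodule.liftQ (rel f g)
    (TensorProduct.liftAddHom φ (by
      intro n l r
      simp only [AddMonoidHom.map_zsmul, AddMonoidHom.smul_apply]) ).toIntLinearMap
    (by
      rw [rel, Submodule.span_le]
      rintro x ⟨l, c, r, rfl⟩
      simp only [SetLike.mem_coe, LinearMap.mem_ker, AddMonoidHom.coe_toIntLinearMap,
        map_sub, TensorProduct.liftAddHom_tmul]
      rw [hbal, sub_self])).toAddMonoidHom

@[simp] lemma lift_tmul {P : Type*} [AddCommGroup P] (φ : L →+ R →+ P)
    (hbal : ∀ l c r, φ (l * f c) r = φ l (g c * r)) (l : L) (r : R) :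
    lift f g φ hbal (tmul f g l r) = φ l r := rfl

/-- The outer left action of `L` on `L ⊗_C R`. -/
def lact (l : L) : Tens f g →+ Tens f g :=
  lift f g (mkBilin (fun l' r => tmul f g (l * l') r)
      (fun a b r => by rw [mul_add, tmul_add_left])
      (fun a r s => by rw [tmul_add_right]))
    (fun l' c r => by simp only [mkBilin_apply]; rw [← mul_assoc, tmul_rel])

@[simp] lemma lact_tmul (l l' : L) (r : R) :
    lact f g l (tmul f g l' r) = tmul f g (l * l') r := rfl

/-- The outer right action of `R` on `L ⊗_C R`. -/
def ract (r : R) : Tens f g →+ Tens f g :=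
  lift f g (mkBilin (fun l' r' => tmul f g l' (r' * r))
      (fun a b r' => by rw [tmul_add_left])
      (fun a r' s => by rw [add_mul, tmul_add_right]))
    (fun l' c r' => by simp only [mkBilin_apply]; rw [tmul_rel, mul_assoc])

@[simp] lemma ract_tmul (r r' : R) (l : L) :
    ract f g r (tmul f g l r') = tmul f g l (r' * r) := rfl

/-- The map induced on relative tensor products by a ring map on the left factor. -/
def mapLeft {L' : Type*} [Ring L'] (h : L →+* L') :
    Tens f g →+ Tens (h.comp f) g :=
  lift f g (mkBilin (fun l r => tmul (h.comp f) g (h l) r)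
      (fun a b r => by rw [map_add, tmul_add_left])
      (fun a r s => by rw [tmul_add_right]))
    (fun l c r => by
      simp only [mkBilin_apply, map_mul]
      exact tmul_rel (h.comp f) g (h l) c r)

@[simp] lemma mapLeft_tmul {L' : Type*} [Ring L'] (h : L →+* L') (l : L) (r : R) :
    mapLeft f g h (tmul f g l r) = tmul (h.comp f) g (h l) r := rfl

/-- The multiplication map `L ⊗_C R → R`, `l ⊗ r ↦ jl l * r`, for a ring map
`jl : L → R` compatible with the two maps from `C`. -/
def mulMap (jl : L →+* R) (hcomp : ∀ c, jl (f c) = g c) : Tens f g →+ R :=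
  lift f g (mkBilin (fun l r => jl l * r)
      (fun a b r => by rw [map_add, add_mul])
      (fun a r s => by rw [mul_add]))
    (fun l c r => by simp only [mkBilin_apply]; rw [map_mul, hcomp, mul_assoc])

@[simp] lemma mulMap_tmul (jl : L →+* R) (hcomp : ∀ c, jl (f c) = g c) (l : L) (r : R) :
    mulMap f g jl hcomp (tmul f g l r) = jl l * r := rfl

/-- Induction principle: every element of `L ⊗_C R` is built from `tmul`s. -/
lemma tens_induction {p : Tens f g → Prop} (zero : p 0)
    (tm : ∀ l r, p (tmul f g l r)) (add : ∀ x y, p x → p y → p (x + y)) :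
    ∀ x, p x := by
  intro x
  obtain ⟨y, rfl⟩ := Submodule.Quotient.mk_surjective _ x
  induction y using TensorProduct.induction_on with
  | zero => exact zero
  | tmul l r => exact tm l r
  | add a b ha hb =>
      rw [Submodule.Quotient.mk_add]
      exact add _ _ ha hb

end NCT
end

noncomputable section
open NCT

/-- The tower `A ⊇ B ⊇ C` (given by injective ring maps `ι : C → B`, `j : B → A`) is
*left relative H-separable*: `B ⊗_C A ⊕ * ≅ A^n` as `B`-`A`-bimodules. -/
def LeftRelHSep {C B A : Type*} [Ring C] [Ring B] [Ring A]
    (ι : C →+* B) (j : B →+* A) (n : ℕ) : Prop :=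
  ∃ (i : Tens ι (j.comp ι) →+ (Fin n → A)) (p : (Fin n → A) →+ Tens ι (j.comp ι)),
    (∀ (b : B) x, i (lact ι (j.comp ι) b x) = fun k => j b * i x k) ∧
    (∀ (a : A) x, i (ract ι (j.comp ι) a x) = fun k => i x k * a) ∧
    (∀ (b : B) v, p (fun k => j b * v k) = lact ι (j.comp ι) b (p v)) ∧
    (∀ (a : A) v, p (fun k => v k * a) = ract ι (j.comp ι) a (p v)) ∧
    ∀ x, p (i x) = x

/-- `B` is a *left relative separable extension of `C` in `A`*: the multiplication map
`μ : B ⊗_C A → A` splits as a `B`-`A`-bimodule epimorphism. -/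
def LeftRelSep {C B A : Type*} [Ring C] [Ring B] [Ring A]
    (ι : C →+* B) (j : B →+* A) : Prop :=
  ∃ σ : A →+ Tens ι (j.comp ι),
    (∀ (b : B) (a : A), σ (j b * a) = lact ι (j.comp ι) b (σ a)) ∧
    (∀ (a a' : A), σ (a * a') = ract ι (j.comp ι) a' (σ a)) ∧
    ∀ a, mulMap ι (j.comp ι) j (fun _ => rfl) (σ a) = a

/-- `B ⊇ C` is a separable extension: there is a `B`-central element
`e ∈ B ⊗_C B` with `μ(e) = 1`. -/
def IsSepExt {C B : Type*} [Ring C] [Ring B] (ι : C →+* B) : Prop :=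
  ∃ e : Tens ι ι, (∀ b : B, lact ι ι b e = ract ι ι b e) ∧
    mulMap ι ι (RingHom.id B) (fun _ => rfl) e = 1

/-- if `E : A → B` is a `B`-`B`-bimodule projection splitting the
extension `A ⊇ B`, and `μ : B ⊗_C A → A` splits as a `B`-`A`-bimodule epimorphism,
then `B ⊇ C` is a separable extension. -/
theorem separable_of_split_of_leftRelSep
    {C B A : Type*} [Ring C] [Ring B] [Ring A]
    (ι : C →+* B) (j : B →+* A)
    (hι : Function.Injective ι) (hj : Function.Injective j)
    (E : A →+ B) (hEproj : ∀ b : B, E (j b) = b)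
    (hEbil : ∀ (b : B) (a : A) (b' : B), E (j b * a * j b') = b * E a * b')
    (hsplit : LeftRelSep ι j) :
    IsSepExt ι := by
  obtain ⟨σ, hσl, hσr, hσμ⟩ := hsplit
  have hEl : ∀ (b : B) (a : A), E (j b * a) = b * E a := by
    intro b a
    have := hEbil b a 1
    simpa using this
  have hEr : ∀ (a : A) (b : B), E (a * j b) = E a * b := by
    intro a b
    have := hEbil 1 a b
    simpa using this
  -- F : B ⊗_C A → B ⊗_C B, b ⊗ a ↦ b ⊗ E a
  set F : Tens ι (j.comp ι) →+ Tens ι ι :=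
    lift ι (j.comp ι) (mkBilin (fun b a => tmul ι ι b (E a))
        (fun b b' a => by rw [tmul_add_left])
        (fun b a a' => by rw [map_add, tmul_add_right]))
      (fun b c a => by
        simp only [mkBilin_apply]
        rw [tmul_rel]
        congr 1
        simpa [RingHom.comp_apply] using (hEl (ι c) a).symm) with hF
  have hF_tmul : ∀ (b : B) (a : A),
      F (tmul ι (j.comp ι) b a) = tmul ι ι b (E a) := fun _ _ => rfl
  refine ⟨F (σ 1), ?_, ?_⟩
  · intro b
    have hrel : lact ι (j.comp ι) b (σ 1) = ract ι (j.comp ι) (j b) (σ 1) := by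
      rw [← hσl b 1, ← hσr 1 (j b)]
      rw [mul_one, one_mul]
    have hFl : ∀ x, F (lact ι (j.comp ι) b x) = lact ι ι b (F x) := by
      intro x
      induction x using tens_induction with
      | zero => simp
      | tm l r => rw [lact_tmul, hF_tmul, hF_tmul, lact_tmul]
      | add x y hx hy => simp [map_add, hx, hy]
    have hFr : ∀ x, F (ract ι (j.comp ι) (j b) x) = ract ι ι b (F x) := by
      intro x
      induction x using tens_induction with
      | zero => simp
      | tm l r => rw [ract_tmul, hF_tmul, hF_tmul, hEr, ract_tmul]
      | add x y hx hy => simp [map_add, hx, hy]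
    rw [← hFl, ← hFr, hrel]
  · have key : ∀ x, mulMap ι ι (RingHom.id B) (fun _ => rfl) (F x)
        = E (mulMap ι (j.comp ι) j (fun _ => rfl) x) := by
      intro x
      induction x using tens_induction with
      | zero => simp
      | tm l r =>
          rw [hF_tmul, mulMap_tmul, mulMap_tmul, hEl]
          rfl
      | add x y hx hy => simp [map_add, hx, hy]
    rw [key, hσμ 1]
    simpa using hEproj 1

end
end

section
/- If B ⊇ C is an H-separable extension (B ⊗_C B is isomorphic to a direct summand of B^m as B-B-bimodules for some m), then for any tower A ⊇ B ⊇ C, the B-A-bimodule B ⊗_C A is isomorphic to a direct summand of A^m as B-A-bimodules (left relative H-separability), and the A-B-bimodule A ⊗_C B is isomorphic to a direct summand of A^m as A-B-bimodules (right relative H-separability). -/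
/-!  A noncommutative relative tensor product `L ⊗_C R` for a ring `C` mapping
into rings `L` (acting on the right through `f`) and `R` (acting on the left
through `g`), together with the outer left `L`-action `lact`, the outer right
`R`-action `ract`, a lifting principle for balanced biadditive maps, and the
multiplication map. -/

open scoped TensorProduct

noncomputable section
open NCT

section AuxLemmas

variable {C L R : Type*} [Ring C] [Ring L] [Ring R] (f : C →+* L) (g : C →+* R)

lemma lact_mul' (l l' : L) (x : Tens f g) :
    lact f g (l * l') x = lact f g l (lact f g l' x) := by
  induction x using tens_induction with
  | zero => simp only [map_zero]
  | tm a r => simp only [lact_tmul, mul_assoc]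
  | add a b ha hb => simp only [map_add, ha, hb]

lemma ract_mul' (r r' : R) (x : Tens f g) :
    ract f g (r * r') x = ract f g r' (ract f g r x) := by
  induction x using tens_induction with
  | zero => simp only [map_zero]
  | tm a s => simp only [ract_tmul, mul_assoc]
  | add a b ha hb => simp only [map_add, ha, hb]

lemma lact_ract_comm' (l : L) (r : R) (x : Tens f g) :
    lact f g l (ract f g r x) = ract f g r (lact f g l x) := by
  induction x using tens_induction with
  | zero => simp only [map_zero]
  | tm a s => simp only [ract_tmul, lact_tmul]
  | add a b ha hb => simp only [map_add, ha, hb]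

lemma lact_add' (l l' : L) (x : Tens f g) :
    lact f g (l + l') x = lact f g l x + lact f g l' x := by
  induction x using tens_induction with
  | zero => simp only [map_zero, add_zero]
  | tm a s => simp only [lact_tmul, add_mul, tmul_add_left]
  | add a b ha hb => simp only [map_add, ha, hb]; abel

lemma ract_add' (r r' : R) (x : Tens f g) :
    ract f g (r + r') x = ract f g r x + ract f g r' x := by
  induction x using tens_induction with
  | zero => simp only [map_zero, add_zero]
  | tm a s => simp only [ract_tmul, mul_add, tmul_add_right]
  | add a b ha hb => simp only [map_add, ha, hb]; abel

/-- The map induced on relative tensor products by a ring map on the right factor. -/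
def mapRight {R' : Type*} [Ring R'] (h : R →+* R') :
    Tens f g →+ Tens f (h.comp g) :=
  lift f g (mkBilin (fun l r => tmul f (h.comp g) l (h r))
      (fun a b r => by rw [tmul_add_left])
      (fun a r s => by rw [map_add, tmul_add_right]))
    (fun l c r => by
      simp only [mkBilin_apply, map_mul]
      exact tmul_rel f (h.comp g) l c (h r))

@[simp] lemma mapRight_tmul {R' : Type*} [Ring R'] (h : R →+* R') (l : L) (r : R) :
    mapRight f g h (tmul f g l r) = tmul f (h.comp g) l (h r) := rfl

lemma mapRight_lact {R' : Type*} [Ring R'] (h : R →+* R') (l : L) (x : Tens f g) :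
    mapRight f g h (lact f g l x) = lact f (h.comp g) l (mapRight f g h x) := by
  induction x using tens_induction with
  | zero => simp only [map_zero]
  | tm a s => simp only [lact_tmul, mapRight_tmul]
  | add a b ha hb => simp only [map_add, ha, hb]

lemma mapRight_ract {R' : Type*} [Ring R'] (h : R →+* R') (r : R) (x : Tens f g) :
    mapRight f g h (ract f g r x) = ract f (h.comp g) (h r) (mapRight f g h x) := by
  induction x using tens_induction with
  | zero => simp only [map_zero]
  | tm a s => simp only [ract_tmul, mapRight_tmul, map_mul]
  | add a b ha hb => simp only [map_add, ha, hb]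

lemma mapLeft_lact {L' : Type*} [Ring L'] (h : L →+* L') (l : L) (x : Tens f g) :
    mapLeft f g h (lact f g l x) = lact (h.comp f) g (h l) (mapLeft f g h x) := by
  induction x using tens_induction with
  | zero => simp only [map_zero]
  | tm a s => simp only [lact_tmul, mapLeft_tmul, map_mul]
  | add a b ha hb => simp only [map_add, ha, hb]

lemma mapLeft_ract {L' : Type*} [Ring L'] (h : L →+* L') (r : R) (x : Tens f g) :
    mapLeft f g h (ract f g r x) = ract (h.comp f) g r (mapLeft f g h x) := by
  induction x using tens_induction with
  | zero => simp only [map_zero]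
  | tm a s => simp only [ract_tmul, mapLeft_tmul]
  | add a b ha hb => simp only [map_add, ha, hb]

section AuxDefs

variable {C B A : Type*} [Ring C] [Ring B] [Ring A] (ι : C →+* B) (j : B →+* A) {m : ℕ}

/-- The map `B ⊗_C A → A^m` induced by `i : B ⊗_C B → B^m` via `− ⊗_B A`. -/
def leftI (i : Tens ι ι →+ (Fin m → B))
    (hir : ∀ (b : B) x, i (ract ι ι b x) = fun k => i x k * b) :
    Tens ι (j.comp ι) →+ (Fin m → A) :=
  lift ι (j.comp ι)
    (mkBilin (fun b a => fun k => j (i (tmul ι ι b 1) k) * a)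
      (fun b b' a => by
        funext k
        rw [tmul_add_left, map_add]
        simp [add_mul])
      (fun b a a' => by funext k; simp [mul_add]))
    (fun b c a => by
      funext k
      simp only [mkBilin_apply]
      have h0 : tmul ι ι (b * ι c) 1 = ract ι ι (ι c) (tmul ι ι b 1) := by
        rw [ract_tmul, one_mul, tmul_rel, mul_one]
      rw [h0, hir]
      simp [map_mul, mul_assoc, RingHom.comp_apply])

@[simp] lemma leftI_tmul (i : Tens ι ι →+ (Fin m → B)) (hir) (b : B) (a : A) :
    leftI ι j i hir (tmul ι (j.comp ι) b a) = fun k => j (i (tmul ι ι b 1) k) * a := rfl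

/-- The map `A^m → B ⊗_C A` induced by `p : B^m → B ⊗_C B` via `− ⊗_B A`. -/
def leftP (p : (Fin m → B) →+ Tens ι ι) : (Fin m → A) →+ Tens ι (j.comp ι) :=
  AddMonoidHom.mk'
    (fun v => ∑ k, ract ι (j.comp ι) (v k) (mapRight ι ι j (p (Pi.single k 1 : Fin m → B))))
    (fun v w => by
      rw [← Finset.sum_add_distrib]
      refine Finset.sum_congr rfl fun k _ => ?_
      rw [Pi.add_apply, ract_add'])

@[simp] lemma leftP_apply (p : (Fin m → B) →+ Tens ι ι) (v : Fin m → A) :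
    leftP ι j p v = ∑ k, ract ι (j.comp ι) (v k) (mapRight ι ι j (p (Pi.single k 1 : Fin m → B))) := rfl

/-- The map `A ⊗_C B → A^m` induced by `i : B ⊗_C B → B^m` via `A ⊗_B −`. -/
def rightI (i : Tens ι ι →+ (Fin m → B))
    (hil : ∀ (b : B) x, i (lact ι ι b x) = fun k => b * i x k) :
    Tens (j.comp ι) ι →+ (Fin m → A) :=
  lift (j.comp ι) ι
    (mkBilin (fun a b => fun k => a * j (i (tmul ι ι 1 b) k))
      (fun a a' b => by funext k; simp [add_mul])
      (fun a b b' => by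
        funext k
        rw [tmul_add_right, map_add]
        simp [mul_add]))
    (fun a c b => by
      funext k
      simp only [mkBilin_apply]
      have h0 : tmul ι ι 1 (ι c * b) = lact ι ι (ι c) (tmul ι ι 1 b) := by
        rw [lact_tmul, mul_one, ← tmul_rel, one_mul]
      rw [h0, hil]
      simp [map_mul, mul_assoc, RingHom.comp_apply])

@[simp] lemma rightI_tmul (i : Tens ι ι →+ (Fin m → B)) (hil) (a : A) (b : B) :
    rightI ι j i hil (tmul (j.comp ι) ι a b) = fun k => a * j (i (tmul ι ι 1 b) k) := rfl

/-- The map `A^m → A ⊗_C B` induced by `p : B^m → B ⊗_C B` via `A ⊗_B −`. -/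
def rightP (p : (Fin m → B) →+ Tens ι ι) : (Fin m → A) →+ Tens (j.comp ι) ι :=
  AddMonoidHom.mk'
    (fun v => ∑ k, lact (j.comp ι) ι (v k) (mapLeft ι ι j (p (Pi.single k 1 : Fin m → B))))
    (fun v w => by
      rw [← Finset.sum_add_distrib]
      refine Finset.sum_congr rfl fun k _ => ?_
      rw [Pi.add_apply, lact_add'])

@[simp] lemma rightP_apply (p : (Fin m → B) →+ Tens ι ι) (v : Fin m → A) :
    rightP ι j p v = ∑ k, lact (j.comp ι) ι (v k) (mapLeft ι ι j (p (Pi.single k 1 : Fin m → B))) := rfl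

/-- Summing the "single" vectors against coefficients recovers the vector. -/
lemma sum_single_mul (w : Fin m → B) :
    (∑ k, fun l => (Pi.single k (1 : B) : Fin m → B) l * w k) = w := by
  funext l
  rw [Finset.sum_apply]
  simp [Pi.single_apply]

lemma sum_mul_single (w : Fin m → B) :
    (∑ k, fun l => w k * (Pi.single k (1 : B) : Fin m → B) l) = w := by
  funext l
  rw [Finset.sum_apply]
  simp [Pi.single_apply]

lemma single_mul_comm (b : B) (k : Fin m) :
    (fun l => (Pi.single k (1 : B) : Fin m → B) l * b) = fun l => b * (Pi.single k (1 : B) : Fin m → B) l := by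
  funext l
  simp [Pi.single_apply, ite_mul, mul_ite]

end AuxDefs

end AuxLemmas

/-- if `B ⊇ C` is H-separable (`B ⊗_C B ⊕ * ≅ B^m` as `B`-`B`-bimodules),
then for any tower `A ⊇ B ⊇ C`, `B ⊗_C A ⊕ * ≅ A^m` as `B`-`A`-bimodules and
`A ⊗_C B ⊕ * ≅ A^m` as `A`-`B`-bimodules. -/
theorem relHSep_of_hSep
    {C B A : Type*} [Ring C] [Ring B] [Ring A]
    (ι : C →+* B) (j : B →+* A)
    (hι : Function.Injective ι) (hj : Function.Injective j) (m : ℕ)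
    (hH : ∃ (i : Tens ι ι →+ (Fin m → B)) (p : (Fin m → B) →+ Tens ι ι),
      (∀ (b : B) x, i (lact ι ι b x) = fun k => b * i x k) ∧
      (∀ (b : B) x, i (ract ι ι b x) = fun k => i x k * b) ∧
      (∀ (b : B) v, p (fun k => b * v k) = lact ι ι b (p v)) ∧
      (∀ (b : B) v, p (fun k => v k * b) = ract ι ι b (p v)) ∧
      ∀ x, p (i x) = x) :
    LeftRelHSep ι j m ∧
    (∃ (i : Tens (j.comp ι) ι →+ (Fin m → A)) (p : (Fin m → A) →+ Tens (j.comp ι) ι),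
      (∀ (a : A) x, i (lact (j.comp ι) ι a x) = fun k => a * i x k) ∧
      (∀ (b : B) x, i (ract (j.comp ι) ι b x) = fun k => i x k * j b) ∧
      (∀ (a : A) v, p (fun k => a * v k) = lact (j.comp ι) ι a (p v)) ∧
      (∀ (b : B) v, p (fun k => v k * j b) = ract (j.comp ι) ι b (p v)) ∧
      ∀ x, p (i x) = x) := by
  obtain ⟨i, p, hil, hir, hpl, hpr, hpi⟩ := hH
  constructor
  · -- Left relative H-separability : B ⊗_C A ⊕ * ≅ A^m
    refine ⟨leftI ι j i hir, leftP ι j p, ?_, ?_, ?_, ?_, ?_⟩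
    · -- i (lact b x) = fun k => j b * i x k
      intro b x
      induction x using tens_induction with
      | zero => funext k; simp only [map_zero, Pi.zero_apply, mul_zero]
      | tm b' a =>
          funext k
          rw [lact_tmul, leftI_tmul, leftI_tmul]
          have : tmul ι ι (b * b') 1 = lact ι ι b (tmul ι ι b' 1) := by rw [lact_tmul]
          rw [this, hil]
          simp [map_mul, mul_assoc]
      | add x y hx hy =>
          funext k
          simp only [map_add, Pi.add_apply, hx, hy, mul_add]
    · -- i (ract a x) = fun k => i x k * a
      intro a x
      induction x using tens_induction with
      | zero => funext k; simp only [map_zero, Pi.zero_apply, zero_mul]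
      | tm b a' =>
          funext k
          rw [ract_tmul, leftI_tmul, leftI_tmul]
          simp [mul_assoc]
      | add x y hx hy =>
          funext k
          simp only [map_add, Pi.add_apply, hx, hy, add_mul]
    · -- p (fun k => j b * v k) = lact b (p v)
      intro b v
      rw [leftP_apply, leftP_apply, map_sum]
      refine Finset.sum_congr rfl fun k _ => ?_
      rw [ract_mul', ← mapRight_ract]
      have h1 : ract ι ι b (p (Pi.single k 1 : Fin m → B)) =
          lact ι ι b (p (Pi.single k 1 : Fin m → B)) := by
        rw [← hpr, ← hpl, single_mul_comm]
      rw [h1, mapRight_lact, lact_ract_comm']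
    · -- p (fun k => v k * a) = ract a (p v)
      intro a v
      rw [leftP_apply, leftP_apply, map_sum]
      refine Finset.sum_congr rfl fun k _ => ?_
      rw [ract_mul']
    · -- p (i x) = x
      intro x
      induction x using tens_induction with
      | zero => simp only [map_zero]
      | tm b a =>
          rw [leftI_tmul, leftP_apply]
          have h1 : ∀ k, ract ι (j.comp ι) (j (i (tmul ι ι b 1) k) * a)
              (mapRight ι ι j (p (Pi.single k 1 : Fin m → B)))
              = ract ι (j.comp ι) a (mapRight ι ι j
                  (ract ι ι (i (tmul ι ι b 1) k) (p (Pi.single k 1 : Fin m → B)))) := by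
            intro k
            rw [ract_mul', mapRight_ract]
          rw [Finset.sum_congr rfl (fun k _ => h1 k), ← map_sum, ← map_sum]
          have h2 : (∑ k, ract ι ι (i (tmul ι ι b 1) k) (p (Pi.single k 1 : Fin m → B)))
              = tmul ι ι b 1 := by
            have h3 : ∀ k, ract ι ι (i (tmul ι ι b 1) k) (p (Pi.single k 1 : Fin m → B))
                = p (fun l => (Pi.single k (1 : B) : Fin m → B) l * i (tmul ι ι b 1) k) :=
              fun k => (hpr _ _).symm
            rw [Finset.sum_congr rfl (fun k _ => h3 k), ← map_sum, sum_single_mul, hpi]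
          rw [h2, mapRight_tmul, map_one, ract_tmul, one_mul]
      | add x y hx hy => rw [map_add, map_add, hx, hy]
  · -- Right relative H-separability : A ⊗_C B ⊕ * ≅ A^m
    refine ⟨rightI ι j i hil, rightP ι j p, ?_, ?_, ?_, ?_, ?_⟩
    · -- i (lact a x) = fun k => a * i x k
      intro a x
      induction x using tens_induction with
      | zero => funext k; simp only [map_zero, Pi.zero_apply, mul_zero]
      | tm a' b =>
          funext k
          rw [lact_tmul, rightI_tmul, rightI_tmul]
          simp [mul_assoc]
      | add x y hx hy =>
          funext k
          simp only [map_add, Pi.add_apply, hx, hy, mul_add]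
    · -- i (ract b x) = fun k => i x k * j b
      intro b x
      induction x using tens_induction with
      | zero => funext k; simp only [map_zero, Pi.zero_apply, zero_mul]
      | tm a b' =>
          funext k
          rw [ract_tmul, rightI_tmul, rightI_tmul]
          have : tmul ι ι 1 (b' * b) = ract ι ι b (tmul ι ι 1 b') := by rw [ract_tmul]
          rw [this, hir]
          simp [map_mul, mul_assoc]
      | add x y hx hy =>
          funext k
          simp only [map_add, Pi.add_apply, hx, hy, add_mul]
    · -- p (fun k => a * v k) = lact a (p v)
      intro a v
      rw [rightP_apply, rightP_apply, map_sum]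
      refine Finset.sum_congr rfl fun k _ => ?_
      rw [lact_mul']
    · -- p (fun k => v k * j b) = ract b (p v)
      intro b v
      rw [rightP_apply, rightP_apply, map_sum]
      refine Finset.sum_congr rfl fun k _ => ?_
      rw [lact_mul', ← mapLeft_lact]
      have h1 : lact ι ι b (p (Pi.single k 1 : Fin m → B)) =
          ract ι ι b (p (Pi.single k 1 : Fin m → B)) := by
        rw [← hpr, ← hpl, single_mul_comm]
      rw [h1, mapLeft_ract, ← lact_ract_comm']
    · -- p (i x) = x
      intro x
      induction x using tens_induction with
      | zero => simp only [map_zero]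
      | tm a b =>
          rw [rightI_tmul, rightP_apply]
          have h1 : ∀ k, lact (j.comp ι) ι (a * j (i (tmul ι ι 1 b) k))
              (mapLeft ι ι j (p (Pi.single k 1 : Fin m → B)))
              = lact (j.comp ι) ι a (mapLeft ι ι j
                  (lact ι ι (i (tmul ι ι 1 b) k) (p (Pi.single k 1 : Fin m → B)))) := by
            intro k
            rw [lact_mul', mapLeft_lact]
          rw [Finset.sum_congr rfl (fun k _ => h1 k), ← map_sum, ← map_sum]
          have h2 : (∑ k, lact ι ι (i (tmul ι ι 1 b) k) (p (Pi.single k 1 : Fin m → B)))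
              = tmul ι ι 1 b := by
            have h3 : ∀ k, lact ι ι (i (tmul ι ι 1 b) k) (p (Pi.single k 1 : Fin m → B))
                = p (fun l => i (tmul ι ι 1 b) k * (Pi.single k (1 : B) : Fin m → B) l) :=
              fun k => (hpl _ _).symm
            rw [Finset.sum_congr rfl (fun k _ => h3 k), ← map_sum, sum_mul_single, hpi]
          rw [h2, mapLeft_tmul, map_one, lact_tmul, mul_one]
      | add x y hx hy => rw [map_add, map_add, hx, hy]

end
end

section
/- Let A ⊇ B ⊇ C be a left relative H-separable tower, i.e., B ⊗_C A ⊕ * ≅ A^n as B-A-bimodules. Then the centralizer D = A^C is a finitely generated projective left module over the centralizer R = A^B. -/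
/-!  A noncommutative relative tensor product `L ⊗_C R` for a ring `C` mapping
into rings `L` (acting on the right through `f`) and `R` (acting on the left
through `g`), together with the outer left `L`-action `lact`, the outer right
`R`-action `ract`, a lifting principle for balanced biadditive maps, and the
multiplication map. -/

open scoped TensorProduct

noncomputable section
open NCT

section Aux

variable {C B A : Type*} [Ring C] [Ring B] [Ring A] (ι : C →+* B) (j : B →+* A)

/-- Multiplication `l ⊗ r ↦ j l * x * r` with a `C`-centralizing element `x`
inserted in the middle. -/
def md (x : ↥(Subring.centralizer (Set.range (j.comp ι)))) :
    Tens ι (j.comp ι) →+ A :=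
  lift ι (j.comp ι)
    (mkBilin (fun l r => j l * (x : A) * r)
      (fun a b r => by rw [map_add, add_mul, add_mul])
      (fun a r s => by rw [mul_add]))
    (fun l c r => by
      have hc : (j.comp ι) c * (x : A) = (x : A) * (j.comp ι) c :=
        Subring.mem_centralizer_iff.mp x.2 _ ⟨c, rfl⟩
      simp only [mkBilin_apply, map_mul, RingHom.comp_apply, mul_assoc] at hc ⊢
      rw [← mul_assoc (j (ι c)), hc, mul_assoc])

@[simp] lemma md_tmul (x : ↥(Subring.centralizer (Set.range (j.comp ι))))
    (l : B) (r : A) :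
    md ι j x (tmul ι (j.comp ι) l r) = j l * (x : A) * r := rfl

lemma md_lact (x : ↥(Subring.centralizer (Set.range (j.comp ι)))) (b : B)
    (t : Tens ι (j.comp ι)) :
    md ι j x (lact ι (j.comp ι) b t) = j b * md ι j x t := by
  induction t using tens_induction with
  | zero => simp
  | tm l r => simp [mul_assoc]
  | add a b ha hb => simp [ha, hb, mul_add]

lemma md_ract (x : ↥(Subring.centralizer (Set.range (j.comp ι)))) (a : A)
    (t : Tens ι (j.comp ι)) :
    md ι j x (ract ι (j.comp ι) a t) = md ι j x t * a := by
  induction t using tens_induction with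
  | zero => simp
  | tm l r => simp [mul_assoc]
  | add u v hu hv => simp [hu, hv, add_mul]

lemma md_add (x y : ↥(Subring.centralizer (Set.range (j.comp ι))))
    (t : Tens ι (j.comp ι)) :
    md ι j (x + y) t = md ι j x t + md ι j y t := by
  induction t using tens_induction with
  | zero => simp
  | tm l r => simp [mul_add, add_mul]
  | add u v hu hv =>
      simp only [map_add, hu, hv]
      abel

lemma md_rmul
    (hRD : Subring.centralizer (Set.range j) ≤ Subring.centralizer (Set.range (j.comp ι)))
    (r : ↥(Subring.centralizer (Set.range j)))
    (x : ↥(Subring.centralizer (Set.range (j.comp ι))))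
    (t : Tens ι (j.comp ι)) :
    md ι j (Subring.inclusion hRD r * x) t = (r : A) * md ι j x t := by
  induction t using tens_induction with
  | zero => simp
  | tm l r' =>
      have hr : j l * (r : A) = (r : A) * j l :=
        Subring.mem_centralizer_iff.mp r.2 _ ⟨l, rfl⟩
      have hco : ((Subring.inclusion hRD r * x : _) : A) = (r : A) * (x : A) := rfl
      simp only [md_tmul, hco, ← mul_assoc, hr]
  | add u v hu hv => rw [map_add, map_add, hu, hv, mul_add]

end Aux

/-- in a left relative H-separable tower `A ⊇ B ⊇ C`, the centralizer
`D = A^C` is a finitely generated projective left module over `R = A^B`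
(stated via the dual basis criterion). -/
theorem centralizer_fg_projective
    {C B A : Type*} [Ring C] [Ring B] [Ring A]
    (ι : C →+* B) (j : B →+* A)
    (hι : Function.Injective ι) (hj : Function.Injective j)
    (hRD : Subring.centralizer (Set.range j) ≤ Subring.centralizer (Set.range (j.comp ι)))
    (hH : ∃ n, LeftRelHSep ι j n) :
    ∃ (n : ℕ) (d : Fin n → ↥(Subring.centralizer (Set.range (j.comp ι))))
      (h : Fin n → (↥(Subring.centralizer (Set.range (j.comp ι))) →+
        ↥(Subring.centralizer (Set.range j)))),
      (∀ (k : Fin n) (r : ↥(Subring.centralizer (Set.range j)))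
          (x : ↥(Subring.centralizer (Set.range (j.comp ι)))),
        h k (Subring.inclusion hRD r * x) = r * h k x) ∧
      ∀ x : ↥(Subring.centralizer (Set.range (j.comp ι))),
        (x : A) = ∑ k, (h k x : A) * (d k : A) := by
  obtain ⟨n, i, p, hil, hir, hpl, hpr, hpi⟩ := hH
  -- the `d k`
  have hd_mem : ∀ k, i (tmul ι (j.comp ι) 1 1) k ∈
      Subring.centralizer (Set.range (j.comp ι)) := by
    intro k
    rw [Subring.mem_centralizer_iff]
    rintro _ ⟨c, rfl⟩
    have h1 : lact ι (j.comp ι) (ι c) (tmul ι (j.comp ι) 1 1)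
        = ract ι (j.comp ι) ((j.comp ι) c) (tmul ι (j.comp ι) 1 1) := by
      rw [lact_tmul, ract_tmul]
      simpa using tmul_rel ι (j.comp ι) 1 c 1
    have h2 := congrArg (fun t => i t k) h1
    simp only [hil, hir] at h2
    simpa [RingHom.comp_apply] using h2
  set d : Fin n → ↥(Subring.centralizer (Set.range (j.comp ι))) :=
    fun k => ⟨i (tmul ι (j.comp ι) 1 1) k, hd_mem k⟩ with hd
  -- the Casimir components `e k`
  set e : Fin n → Tens ι (j.comp ι) := fun k => p (Pi.single k 1) with he
  have he_central : ∀ (b : B) k, lact ι (j.comp ι) b (e k) = ract ι (j.comp ι) (j b) (e k) := by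
    intro b k
    rw [he]
    dsimp only
    rw [← hpl, ← hpr]
    congr 1
    funext m
    simp [Pi.single_apply, mul_ite, ite_mul]
  have mem_R : ∀ (x : ↥(Subring.centralizer (Set.range (j.comp ι)))) k,
      md ι j x (e k) ∈ Subring.centralizer (Set.range j) := by
    intro x k
    rw [Subring.mem_centralizer_iff]
    rintro _ ⟨b, rfl⟩
    rw [← md_lact, he_central, md_ract]
  refine ⟨n, d, fun k => AddMonoidHom.mk' (fun x => ⟨md ι j x (e k), mem_R x k⟩)
      (fun x y => Subtype.ext (md_add ι j x y (e k))), ?_, ?_⟩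
  · intro k r x
    exact Subtype.ext (md_rmul ι j hRD r x (e k))
  · intro x
    -- `1 ⊗ 1 = ∑ ract (d m) (e m)`
    have key : tmul ι (j.comp ι) 1 1
        = ∑ m, ract ι (j.comp ι) ((d m : A)) (e m) := by
      have h0 : tmul ι (j.comp ι) 1 1 = p (i (tmul ι (j.comp ι) 1 1)) := (hpi _).symm
      rw [h0]
      have h1 : i (tmul ι (j.comp ι) 1 1)
          = ∑ m, (fun k => (Pi.single m (1 : A) : Fin n → A) k * (d m : A)) := by
        rw [← Finset.univ_sum_single (i (tmul ι (j.comp ι) 1 1))]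
        refine Finset.sum_congr rfl fun m _ => ?_
        funext k
        simp [Pi.single_apply, ite_mul, hd]
      rw [h1, map_sum]
      refine Finset.sum_congr rfl fun m _ => ?_
      rw [hpr]
    have hx : (x : A) = md ι j x (tmul ι (j.comp ι) 1 1) := by simp
    rw [hx, key, map_sum]
    refine Finset.sum_congr rfl fun m _ => ?_
    rw [md_ract]
    rfl

end
end

section
/- Let A ⊇ B ⊇ C be a left relative H-separable tower with D = A^C and R = A^B. Then the map B ⊗_C A → Hom(_R D, _R A) sending b ⊗ a to (d ↦ b d a) is an isomorphism of B-A-bimodules. -/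
/-!  A noncommutative relative tensor product `L ⊗_C R` for a ring `C` mapping
into rings `L` (acting on the right through `f`) and `R` (acting on the left
through `g`), together with the outer left `L`-action `lact`, the outer right
`R`-action `ract`, a lifting principle for balanced biadditive maps, and the
multiplication map. -/

open scoped TensorProduct

noncomputable section
open NCT

/-- The `B`-`A`-bimodule map `B ⊗_C A → Hom(_R D, _R A)`, `b ⊗ a ↦ (d ↦ b d a)`,
where `D = A^C`. -/
def Phi {C B A : Type*} [Ring C] [Ring B] [Ring A] (ι : C →+* B) (j : B →+* A) :
    Tens ι (j.comp ι) →+ (↥(Subring.centralizer (Set.range (j.comp ι))) →+ A) :=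
  lift ι (j.comp ι)
    (mkBilin (fun b a => AddMonoidHom.mk'
        (fun d : ↥(Subring.centralizer (Set.range (j.comp ι))) => j b * (d : A) * a)
        (fun x y => by
          push_cast
          rw [mul_add, add_mul]))
      (fun b b' a => by ext d; simp only [AddMonoidHom.mk'_apply, map_add]; rw [add_mul, add_mul]; rfl
      )
      (fun b a a' => by ext d; simp only [AddMonoidHom.mk'_apply]; rw [mul_add]; rfl))
    (fun b c a => by
      ext d
      have hd := d.2
      rw [Subring.mem_centralizer_iff] at hd
      have hcd : j (ι c) * (d : A) = (d : A) * j (ι c) := hd _ ⟨c, rfl⟩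
      simp only [mkBilin_apply, AddMonoidHom.mk'_apply, map_mul]
      rw [show ((j.comp ι) c : A) = j (ι c) from rfl, mul_assoc (j b) (j (ι c)) (d : A),
        hcd, ← mul_assoc, mul_assoc (j b * (d : A))])

/-- in a left relative H-separable tower `A ⊇ B ⊇ C`, the map
`B ⊗_C A → Hom(_R D, _R A)`, `b ⊗ a ↦ (d ↦ b d a)`, is an isomorphism of
`B`-`A`-bimodules onto the left `R`-linear maps `D → A`. -/
theorem tens_iso_homRD
    {C B A : Type*} [Ring C] [Ring B] [Ring A]
    (ι : C →+* B) (j : B →+* A)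
    (hι : Function.Injective ι) (hj : Function.Injective j)
    (hRD : Subring.centralizer (Set.range j) ≤ Subring.centralizer (Set.range (j.comp ι)))
    (hH : ∃ n, LeftRelHSep ι j n) :
    Function.Injective (Phi ι j) ∧
    (∀ x (r : ↥(Subring.centralizer (Set.range j)))
        (d : ↥(Subring.centralizer (Set.range (j.comp ι)))),
      Phi ι j x (Subring.inclusion hRD r * d) = (r : A) * Phi ι j x d) ∧
    (∀ g : ↥(Subring.centralizer (Set.range (j.comp ι))) →+ A,
      (∀ (r : ↥(Subring.centralizer (Set.range j)))
          (d : ↥(Subring.centralizer (Set.range (j.comp ι)))),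
        g (Subring.inclusion hRD r * d) = (r : A) * g d) →
      ∃ x, Phi ι j x = g) ∧
    (∀ (b : B) x d, Phi ι j (lact ι (j.comp ι) b x) d = j b * Phi ι j x d) ∧
    (∀ (a : A) x d, Phi ι j (ract ι (j.comp ι) a x) d = Phi ι j x d * a) := by
  classical
  obtain ⟨n, i, p, hil, hir, hpl, hpr, hpi⟩ := hH
  have Phi_tmul : ∀ (b : B) (a : A) d,
      Phi ι j (tmul ι (j.comp ι) b a) d = j b * (d : A) * a := fun _ _ _ => rfl
  -- Φ is a left B-module map (outer actions)
  have phi_lact : ∀ (b : B) x d,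
      Phi ι j (lact ι (j.comp ι) b x) d = j b * Phi ι j x d := by
    intro b x d
    induction x using tens_induction with
    | zero => simp
    | tm b' a => simp only [lact_tmul, Phi_tmul, map_mul, mul_assoc]
    | add u v hu hv => simp only [map_add, AddMonoidHom.add_apply, hu, hv, mul_add]
  -- Φ is a right A-module map
  have phi_ract : ∀ (a : A) x d,
      Phi ι j (ract ι (j.comp ι) a x) d = Phi ι j x d * a := by
    intro a x d
    induction x using tens_induction with
    | zero => simp
    | tm b a' => rw [ract_tmul, Phi_tmul, Phi_tmul, ← mul_assoc]
    | add u v hu hv => simp only [map_add, AddMonoidHom.add_apply, hu, hv, add_mul]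
  -- the d_k lie in D
  have hd : ∀ k : Fin n,
      i (tmul ι (j.comp ι) 1 1) k ∈ Subring.centralizer (Set.range (j.comp ι)) := by
    intro k
    rw [Subring.mem_centralizer_iff]
    rintro _ ⟨c, rfl⟩
    have h1 : lact ι (j.comp ι) (ι c) (tmul ι (j.comp ι) 1 1)
        = ract ι (j.comp ι) ((j.comp ι) c) (tmul ι (j.comp ι) 1 1) := by
      rw [lact_tmul, ract_tmul, mul_one, one_mul]
      have h := tmul_rel ι (j.comp ι) 1 c 1
      rw [one_mul, mul_one] at h
      exact h
    have h2 := congrFun (hil (ι c) (tmul ι (j.comp ι) 1 1)) k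
    have h3 := congrFun (hir ((j.comp ι) c) (tmul ι (j.comp ι) 1 1)) k
    rw [h1, h3] at h2
    exact h2.symm
  -- reconstruction: x = ∑ₖ eₖ · (i x)ₖ
  have recon : ∀ x : Tens ι (j.comp ι),
      ∑ k : Fin n, ract ι (j.comp ι) (i x k) (p (Pi.single k 1)) = x := by
    intro x
    have h1 : ∀ k : Fin n, ract ι (j.comp ι) (i x k) (p (Pi.single k 1))
        = p (Pi.single k (i x k)) := by
      intro k
      rw [← hpr]
      congr 1
      funext m
      by_cases h : m = k
      · subst h; simp
      · simp [Pi.single_eq_of_ne h]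
    simp_rw [h1]
    rw [← map_sum, Finset.univ_sum_single, hpi]
  -- the eₖ are B-central
  have ecen : ∀ (b : B) (k : Fin n),
      lact ι (j.comp ι) b (p (Pi.single k 1)) = ract ι (j.comp ι) (j b) (p (Pi.single k 1)) := by
    intro b k
    rw [← hpl, ← hpr]
    congr 1
    funext m
    by_cases h : m = k
    · subst h; simp
    · simp [Pi.single_eq_of_ne h]
  -- Φ evaluated at d_k recovers i
  have phi_dk : ∀ x (k : Fin n),
      Phi ι j x ⟨i (tmul ι (j.comp ι) 1 1) k, hd k⟩ = i x k := by
    intro x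
    induction x using tens_induction with
    | zero =>
        intro k
        simp
    | tm b a =>
        intro k
        have hx : tmul ι (j.comp ι) b a
            = lact ι (j.comp ι) b (ract ι (j.comp ι) a (tmul ι (j.comp ι) 1 1)) := by
          rw [ract_tmul, lact_tmul, mul_one, one_mul]
        rw [Phi_tmul, hx, congrFun (hil b _) k, congrFun (hir a _) k, mul_assoc]
    | add u v hu hv =>
        intro k
        rw [map_add, AddMonoidHom.add_apply, map_add, Pi.add_apply, hu, hv]
  refine ⟨?_, ?_, ?_, phi_lact, phi_ract⟩
  · -- injectivity
    intro x y hxy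
    have hixy : i x = i y := funext fun k => by rw [← phi_dk x k, ← phi_dk y k, hxy]
    rw [← hpi x, ← hpi y, hixy]
  · -- left R-semilinearity
    intro x r d
    induction x using tens_induction with
    | zero => simp
    | tm b a =>
        rw [Phi_tmul, Phi_tmul]
        have hco : ((Subring.inclusion hRD r * d : Subring.centralizer (Set.range (j.comp ι)))
            : A) = (r : A) * (d : A) := by
          push_cast
          rfl
        have hr : j b * (r : A) = (r : A) * j b :=
          (Subring.mem_centralizer_iff.mp r.2) _ ⟨b, rfl⟩
        rw [hco, ← mul_assoc (j b) (r : A) (d : A), hr,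
          mul_assoc (r : A) (j b) (d : A), mul_assoc (r : A) (j b * (d : A)) a]
    | add u v hu hv =>
        rw [map_add, AddMonoidHom.add_apply, AddMonoidHom.add_apply, hu, hv, mul_add]
  · -- surjectivity onto R-linear maps
    intro g hg
    refine ⟨∑ k : Fin n,
      ract ι (j.comp ι) (g ⟨i (tmul ι (j.comp ι) 1 1) k, hd k⟩) (p (Pi.single k 1)), ?_⟩
    ext d
    -- each Φ(eₖ) d lies in R
    have hrk : ∀ k : Fin n,
        Phi ι j (p (Pi.single k 1)) d ∈ Subring.centralizer (Set.range j) := by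
      intro k
      rw [Subring.mem_centralizer_iff]
      rintro _ ⟨b, rfl⟩
      rw [← phi_lact b, ecen b k, phi_ract]
    -- decomposition of d
    have hdec : (d : A)
        = ∑ k : Fin n, Phi ι j (p (Pi.single k 1)) d * i (tmul ι (j.comp ι) 1 1) k := by
      have h := congrArg (fun t => Phi ι j t d) (recon (tmul ι (j.comp ι) 1 1))
      simp only [map_sum, AddMonoidHom.finset_sum_apply, phi_ract] at h
      rw [Phi_tmul, map_one, one_mul, mul_one] at h
      exact h.symm
    have hdecD : d = ∑ k : Fin n,
        Subring.inclusion hRD ⟨Phi ι j (p (Pi.single k 1)) d, hrk k⟩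
          * ⟨i (tmul ι (j.comp ι) 1 1) k, hd k⟩ := by
      apply Subtype.ext
      push_cast
      exact hdec
    rw [map_sum, AddMonoidHom.finset_sum_apply]
    simp only [phi_ract]
    conv_rhs => rw [hdecD, map_sum]
    refine Finset.sum_congr rfl fun k _ => ?_
    rw [hg ⟨Phi ι j (p (Pi.single k 1)) d, hrk k⟩ ⟨i (tmul ι (j.comp ι) 1 1) k, hd k⟩]

end
end

section
/- Let A ⊇ B ⊇ C be a left relative H-separable tower. If B ⊇ C is a separable extension, then D = A^C is a split extension of R = A^B; explicitly, if e ∈ (B ⊗_C B)^B with e¹e² = 1 is a separability element, then d ↦ e¹ d e² is an R-R-bimodule projection D → R with 1 ↦ 1. -/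
/-!  A noncommutative relative tensor product `L ⊗_C R` for a ring `C` mapping
into rings `L` (acting on the right through `f`) and `R` (acting on the left
through `g`), together with the outer left `L`-action `lact`, the outer right
`R`-action `ract`, a lifting principle for balanced biadditive maps, and the
multiplication map. -/

open scoped TensorProduct

noncomputable section
open NCT

/-- The sandwich map `B ⊗_C B → (D →+ A)`, `b ⊗ b' ↦ (d ↦ b d b')`,
where `D = A^C`. -/
def sandw {C B A : Type*} [Ring C] [Ring B] [Ring A] (ι : C →+* B) (j : B →+* A) :
    Tens ι ι →+ (↥(Subring.centralizer (Set.range (j.comp ι))) →+ A) :=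
  lift ι ι
    (mkBilin (fun b b' => AddMonoidHom.mk'
        (fun d : ↥(Subring.centralizer (Set.range (j.comp ι))) => j b * (d : A) * j b')
        (fun x y => by push_cast; rw [mul_add, add_mul]))
      (fun b b' b'' => by
        ext d; simp only [AddMonoidHom.mk'_apply, map_add]; rw [add_mul, add_mul]; rfl)
      (fun b b' b'' => by
        ext d; simp only [AddMonoidHom.mk'_apply, map_add]; rw [mul_add]; rfl))
    (fun b c b' => by
      ext d
      have hd := d.2
      rw [Subring.mem_centralizer_iff] at hd
      have hcd : j (ι c) * (d : A) = (d : A) * j (ι c) := hd _ ⟨c, rfl⟩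
      simp only [mkBilin_apply, AddMonoidHom.mk'_apply, map_mul]
      rw [mul_assoc (j b) (j (ι c)) (d : A), hcd, ← mul_assoc,
        mul_assoc (j b * (d : A))])

section Aux

variable {C B A : Type*} [Ring C] [Ring B] [Ring A] (ι : C →+* B) (j : B →+* A)

lemma sandw_tmul (b b' : B) (d : ↥(Subring.centralizer (Set.range (j.comp ι)))) :
    sandw ι j (tmul ι ι b b') d = j b * (d : A) * j b' := rfl

lemma sandw_lact (b : B) (x : Tens ι ι)
    (d : ↥(Subring.centralizer (Set.range (j.comp ι)))) :
    sandw ι j (lact ι ι b x) d = j b * sandw ι j x d := by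
  refine tens_induction ι ι (p := fun x => sandw ι j (lact ι ι b x) d = j b * sandw ι j x d) ?_ ?_ ?_ x
  · simp
  · intro b₁ b₂
    rw [lact_tmul, sandw_tmul, sandw_tmul, map_mul]; noncomm_ring
  · intro y z hy hz
    simp only [map_add, AddMonoidHom.add_apply, hy, hz, mul_add]

lemma sandw_ract (b : B) (x : Tens ι ι)
    (d : ↥(Subring.centralizer (Set.range (j.comp ι)))) :
    sandw ι j (ract ι ι b x) d = sandw ι j x d * j b := by
  refine tens_induction ι ι (p := fun x => sandw ι j (ract ι ι b x) d = sandw ι j x d * j b) ?_ ?_ ?_ x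
  · simp
  · intro b₁ b₂
    rw [ract_tmul, sandw_tmul, sandw_tmul, map_mul]; noncomm_ring
  · intro y z hy hz
    simp only [map_add, AddMonoidHom.add_apply, hy, hz, add_mul]

lemma sandw_central (x : Tens ι ι)
    (hRD : Subring.centralizer (Set.range j) ≤ Subring.centralizer (Set.range (j.comp ι)))
    (r : ↥(Subring.centralizer (Set.range j))) :
    sandw ι j x (Subring.inclusion hRD r)
      = (r : A) * j (mulMap ι ι (RingHom.id B) (fun _ => rfl) x) := by
  have hr : ∀ b : B, j b * (r : A) = (r : A) * j b := fun b =>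
    r.2 (j b) ⟨b, rfl⟩
  refine tens_induction ι ι (p := fun x => sandw ι j x (Subring.inclusion hRD r)
      = (r : A) * j (mulMap ι ι (RingHom.id B) (fun _ => rfl) x)) ?_ ?_ ?_ x
  · simp
  · intro b₁ b₂
    rw [sandw_tmul]
    have : ((Subring.inclusion hRD r : ↥(Subring.centralizer (Set.range (j.comp ι)))) : A)
        = (r : A) := rfl
    rw [this, mulMap_tmul, RingHom.id_apply, map_mul, hr, mul_assoc]
  · intro y z hy hz
    simp only [map_add, AddMonoidHom.add_apply, hy, hz, mul_add]

end Aux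

/-- in a left relative H-separable tower `A ⊇ B ⊇ C`, if `B ⊇ C` is a
separable extension with separability element `e`, then `d ↦ e¹ d e²` is an `R`-`R`-bimodule
projection `D → R` restricting to the identity on `R`; in particular `D ⊇ R` is split. -/
theorem centralizer_split_of_separable
    {C B A : Type*} [Ring C] [Ring B] [Ring A]
    (ι : C →+* B) (j : B →+* A)
    (hι : Function.Injective ι) (hj : Function.Injective j)
    (hRD : Subring.centralizer (Set.range j) ≤ Subring.centralizer (Set.range (j.comp ι)))
    (hH : ∃ n, LeftRelHSep ι j n)
    (e : Tens ι ι)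
    (hecent : ∀ b : B, lact ι ι b e = ract ι ι b e)
    (hemu : mulMap ι ι (RingHom.id B) (fun _ => rfl) e = 1) :
    (∀ d : ↥(Subring.centralizer (Set.range (j.comp ι))),
      sandw ι j e d ∈ Subring.centralizer (Set.range j)) ∧
    (∀ r : ↥(Subring.centralizer (Set.range j)),
      sandw ι j e (Subring.inclusion hRD r) = r) ∧
    (∀ (r : ↥(Subring.centralizer (Set.range j)))
        (d : ↥(Subring.centralizer (Set.range (j.comp ι)))),
      sandw ι j e (Subring.inclusion hRD r * d) = (r : A) * sandw ι j e d) ∧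
    (∀ (r : ↥(Subring.centralizer (Set.range j)))
        (d : ↥(Subring.centralizer (Set.range (j.comp ι)))),
      sandw ι j e (d * Subring.inclusion hRD r) = sandw ι j e d * (r : A)) := by
  have key : ∀ (b : B) (d : ↥(Subring.centralizer (Set.range (j.comp ι)))),
      j b * sandw ι j e d = sandw ι j e d * j b := by
    intro b d
    rw [← sandw_lact, hecent, sandw_ract]
  have coe_mul : ∀ (r : ↥(Subring.centralizer (Set.range j)))
      (d : ↥(Subring.centralizer (Set.range (j.comp ι)))),
      ((Subring.inclusion hRD r * d : ↥(Subring.centralizer (Set.range (j.comp ι)))) : A)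
        = (r : A) * (d : A) := fun _ _ => rfl
  have coe_mul' : ∀ (r : ↥(Subring.centralizer (Set.range j)))
      (d : ↥(Subring.centralizer (Set.range (j.comp ι)))),
      ((d * Subring.inclusion hRD r : ↥(Subring.centralizer (Set.range (j.comp ι)))) : A)
        = (d : A) * (r : A) := fun _ _ => rfl
  refine ⟨?_, ?_, ?_, ?_⟩
  · intro d
    rw [Subring.mem_centralizer_iff]
    rintro a ⟨b, rfl⟩
    exact key b d
  · intro r
    rw [sandw_central ι j e hRD r, hemu, map_one, mul_one]
  · -- left R-linearity
    intro r d
    have hr : ∀ b : B, j b * (r : A) = (r : A) * j b := fun b =>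
      r.2 (j b) ⟨b, rfl⟩
    refine tens_induction ι ι (p := fun e => sandw ι j e (Subring.inclusion hRD r * d)
        = (r : A) * sandw ι j e d) ?_ ?_ ?_ e
    · simp
    · intro b₁ b₂
      rw [sandw_tmul, sandw_tmul, coe_mul, ← mul_assoc (j b₁), hr b₁]; noncomm_ring
    · intro y z hy hz
      simp only [map_add, AddMonoidHom.add_apply, hy, hz, mul_add]
  · -- right R-linearity
    intro r d
    have hr : ∀ b : B, j b * (r : A) = (r : A) * j b := fun b =>
      r.2 (j b) ⟨b, rfl⟩
    refine tens_induction ι ι (p := fun e => sandw ι j e (d * Subring.inclusion hRD r)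
        = sandw ι j e d * (r : A)) ?_ ?_ ?_ e
    · simp
    · intro b₁ b₂
      rw [sandw_tmul, sandw_tmul, coe_mul', mul_assoc, mul_assoc, ← hr b₂]; noncomm_ring
    · intro y z hy hz
      simp only [map_add, AddMonoidHom.add_apply, hy, hz, add_mul]

end
end

section
/- Let A ⊇ B ⊇ C be a left relative H-separable tower. If B ⊇ C is H-separable (H-depth 1), then D = A^C is centrally projective over R = A^B (depth 1), i.e., D ⊕ * ≅ R^t as R-R-bimodules. -/
/-!  A noncommutative relative tensor product `L ⊗_C R` for a ring `C` mapping
into rings `L` (acting on the right through `f`) and `R` (acting on the left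
through `g`), together with the outer left `L`-action `lact`, the outer right
`R`-action `ract`, a lifting principle for balanced biadditive maps, and the
multiplication map. -/

open scoped TensorProduct

noncomputable section
open NCT

section AuxPhi

variable {C B A : Type*} [Ring C] [Ring B] [Ring A] (ι : C →+* B) (j : B →+* A)

/-- The map `B ⊗_C B → A`, `b ⊗ b' ↦ j b * d * j b'`, for `d` centralizing `C`. -/
def phi (d : A) (hd : ∀ c : C, j (ι c) * d = d * j (ι c)) : Tens ι ι →+ A :=
  lift ι ι (mkBilin (fun b b' => j b * d * j b')
      (fun a b r => by rw [map_add, add_mul, add_mul])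
      (fun a r s => by rw [map_add, mul_add]))
    (fun b c b' => by
      simp only [mkBilin_apply, map_mul, mul_assoc]
      rw [← mul_assoc (j (ι c)), hd c, mul_assoc])

@[simp] lemma phi_tmul (d : A) (hd : ∀ c : C, j (ι c) * d = d * j (ι c)) (b b' : B) :
    phi ι j d hd (tmul ι ι b b') = j b * d * j b' := rfl

lemma phi_lact (d : A) (hd : ∀ c : C, j (ι c) * d = d * j (ι c)) (b : B) (x : Tens ι ι) :
    phi ι j d hd (lact ι ι b x) = j b * phi ι j d hd x := by
  induction x using tens_induction with
  | zero => simp only [map_zero, mul_zero]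
  | tm l r => simp only [lact_tmul, phi_tmul, map_mul, mul_assoc]
  | add x y hx hy => simp only [map_add, hx, hy, mul_add]

lemma phi_ract (d : A) (hd : ∀ c : C, j (ι c) * d = d * j (ι c)) (b : B) (x : Tens ι ι) :
    phi ι j d hd (ract ι ι b x) = phi ι j d hd x * j b := by
  induction x using tens_induction with
  | zero => simp only [map_zero, zero_mul]
  | tm l r => simp only [ract_tmul, phi_tmul, map_mul, mul_assoc]
  | add x y hx hy => simp only [map_add, hx, hy, add_mul]

lemma phi_add (d d' : A) (hd : ∀ c : C, j (ι c) * d = d * j (ι c))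
    (hd' : ∀ c : C, j (ι c) * d' = d' * j (ι c))
    (hdd' : ∀ c : C, j (ι c) * (d + d') = (d + d') * j (ι c)) (x : Tens ι ι) :
    phi ι j (d + d') hdd' x = phi ι j d hd x + phi ι j d' hd' x := by
  induction x using tens_induction with
  | zero => simp only [map_zero, add_zero]
  | tm l r => simp only [phi_tmul, mul_add, add_mul]
  | add x y hx hy =>
      simp only [map_add, hx, hy]
      abel

lemma phi_rmul (d r : A) (hr : ∀ b : B, j b * r = r * j b)
    (hd : ∀ c : C, j (ι c) * d = d * j (ι c))
    (hrd : ∀ c : C, j (ι c) * (r * d) = (r * d) * j (ι c)) (x : Tens ι ι) :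
    phi ι j (r * d) hrd x = r * phi ι j d hd x := by
  induction x using tens_induction with
  | zero => simp only [map_zero, mul_zero]
  | tm l s =>
      simp only [phi_tmul]
      calc j l * (r * d) * j s = (j l * r) * (d * j s) := by simp only [mul_assoc]
        _ = (r * j l) * (d * j s) := by rw [hr l]
        _ = r * (j l * d * j s) := by simp only [mul_assoc]
  | add x y hx hy => simp only [map_add, hx, hy, mul_add]

lemma phi_mulr (d r : A) (hr : ∀ b : B, j b * r = r * j b)
    (hd : ∀ c : C, j (ι c) * d = d * j (ι c))
    (hdr : ∀ c : C, j (ι c) * (d * r) = (d * r) * j (ι c)) (x : Tens ι ι) :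
    phi ι j (d * r) hdr x = phi ι j d hd x * r := by
  induction x using tens_induction with
  | zero => simp only [map_zero, zero_mul]
  | tm l s =>
      simp only [phi_tmul]
      calc j l * (d * r) * j s = (j l * d) * (r * j s) := by simp only [mul_assoc]
        _ = (j l * d) * (j s * r) := by rw [hr s]
        _ = (j l * d * j s) * r := by simp only [mul_assoc]
  | add x y hx hy => simp only [map_add, hx, hy, add_mul]

end AuxPhi

/-- in a left relative H-separable tower `A ⊇ B ⊇ C`, if `B ⊇ C` is
H-separable then `D = A^C` is centrally projective over `R = A^B`, stated via the
centrally projective dual basis criterion: there are `R`-`R`-bimodule maps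
`h_i : D → R` and elements `w_i ∈ D^R` with `d = Σ h_i(d) w_i`. -/
theorem centralizer_centrallyProjective_of_hSep
    {C B A : Type*} [Ring C] [Ring B] [Ring A]
    (ι : C →+* B) (j : B →+* A)
    (hι : Function.Injective ι) (hj : Function.Injective j)
    (hRD : Subring.centralizer (Set.range j) ≤ Subring.centralizer (Set.range (j.comp ι)))
    (hH : ∃ n, LeftRelHSep ι j n)
    (hHsepBC : ∃ (t : ℕ) (i : Tens ι ι →+ (Fin t → B)) (p : (Fin t → B) →+ Tens ι ι),
      (∀ (b : B) x, i (lact ι ι b x) = fun k => b * i x k) ∧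
      (∀ (b : B) x, i (ract ι ι b x) = fun k => i x k * b) ∧
      (∀ (b : B) v, p (fun k => b * v k) = lact ι ι b (p v)) ∧
      (∀ (b : B) v, p (fun k => v k * b) = ract ι ι b (p v)) ∧
      ∀ x, p (i x) = x) :
    ∃ (t : ℕ)
      (h : Fin t → (↥(Subring.centralizer (Set.range (j.comp ι))) →+
        ↥(Subring.centralizer (Set.range j))))
      (w : Fin t → ↥(Subring.centralizer (Set.range (j.comp ι)))),
      (∀ (k : Fin t) (r : ↥(Subring.centralizer (Set.range j))),
        w k * Subring.inclusion hRD r = Subring.inclusion hRD r * w k) ∧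
      (∀ (k : Fin t) (r : ↥(Subring.centralizer (Set.range j)))
          (d : ↥(Subring.centralizer (Set.range (j.comp ι)))),
        h k (Subring.inclusion hRD r * d) = r * h k d) ∧
      (∀ (k : Fin t) (r : ↥(Subring.centralizer (Set.range j)))
          (d : ↥(Subring.centralizer (Set.range (j.comp ι)))),
        h k (d * Subring.inclusion hRD r) = h k d * r) ∧
      ∀ d : ↥(Subring.centralizer (Set.range (j.comp ι))),
        d = ∑ k, Subring.inclusion hRD (h k d) * w k := by
  classical
  obtain ⟨t, i, p, hil, hir, hpl, hpr, hpi⟩ := hHsepBC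
  have hdD : ∀ d : ↥(Subring.centralizer (Set.range (j.comp ι))), ∀ c : C,
      j (ι c) * (d : A) = (d : A) * j (ι c) := fun d c =>
    Subring.mem_centralizer_iff.mp d.2 _ ⟨c, rfl⟩
  have hrR : ∀ r : ↥(Subring.centralizer (Set.range j)), ∀ b : B,
      j b * (r : A) = (r : A) * j b := fun r b =>
    Subring.mem_centralizer_iff.mp r.2 _ ⟨b, rfl⟩
  set δ : Fin t → Fin t → B := fun k m => if m = k then 1 else 0 with hδ
  set z : Fin t → Tens ι ι := fun k => p (δ k) with hz
  set v : Fin t → B := i (tmul ι ι 1 1) with hv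
  -- each z k is B-central
  have hzc : ∀ (b : B) (k : Fin t), lact ι ι b (z k) = ract ι ι b (z k) := by
    intro b k
    have hfun : (fun m => b * δ k m) = (fun m => δ k m * b) := by
      funext m
      by_cases hmk : m = k <;> simp [hδ, hmk]
    calc lact ι ι b (z k) = p (fun m => b * δ k m) := (hpl b (δ k)).symm
      _ = p (fun m => δ k m * b) := by rw [hfun]
      _ = ract ι ι b (z k) := hpr b (δ k)
  -- v k centralizes C
  have hvC : ∀ (c : C) (k : Fin t), ι c * v k = v k * ι c := by
    intro c k
    have h1 : lact ι ι (ι c) (tmul ι ι 1 1) = ract ι ι (ι c) (tmul ι ι 1 1) := by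
      rw [lact_tmul, ract_tmul]
      have := tmul_rel ι ι 1 c 1
      simpa using this
    have h2 := congrArg i h1
    rw [hil, hir] at h2
    exact congrFun h2 k
  -- the dual-basis equation Σ z_k · v_k = 1 ⊗ 1
  have hsum : (∑ k, ract ι ι (v k) (z k)) = tmul ι ι 1 1 := by
    have hterm : ∀ k, ract ι ι (v k) (z k) = p (fun m => δ k m * v k) :=
      fun k => (hpr (v k) (δ k)).symm
    calc (∑ k, ract ι ι (v k) (z k)) = ∑ k, p (fun m => δ k m * v k) := by
          simp only [hterm]
      _ = p (∑ k, fun m => δ k m * v k) := (map_sum p _ _).symm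
      _ = p v := by
          congr 1
          funext m
          simp only [Finset.sum_apply, hδ]
          simp [Finset.sum_ite_eq]
      _ = tmul ι ι 1 1 := hpi _
  -- the values phi d (z k) lie in the centralizer of B
  have memR : ∀ (d : ↥(Subring.centralizer (Set.range (j.comp ι)))) (k : Fin t),
      phi ι j (d : A) (hdD d) (z k) ∈ Subring.centralizer (Set.range j) := by
    intro d k
    rw [Subring.mem_centralizer_iff]
    rintro _ ⟨b, rfl⟩
    rw [← phi_lact, hzc b k, phi_ract]
  have memD : ∀ k : Fin t, j (v k) ∈ Subring.centralizer (Set.range (j.comp ι)) := by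
    intro k
    rw [Subring.mem_centralizer_iff]
    rintro _ ⟨c, rfl⟩
    simp only [RingHom.coe_comp, Function.comp_apply, ← map_mul, hvC c k]
  refine ⟨t, fun k => AddMonoidHom.mk'
      (fun d => ⟨phi ι j (d : A) (hdD d) (z k), memR d k⟩)
      (fun d d' => Subtype.ext (phi_add ι j (d : A) (d' : A) (hdD d) (hdD d')
        (hdD (d + d')) (z k))),
    fun k => ⟨j (v k), memD k⟩, ?_, ?_, ?_, ?_⟩
  · intro k r
    refine Subtype.ext ?_
    show j (v k) * (r : A) = (r : A) * j (v k)
    exact Subring.mem_centralizer_iff.mp r.2 _ ⟨v k, rfl⟩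
  · intro k r d
    exact Subtype.ext (phi_rmul ι j (d : A) (r : A) (hrR r) (hdD d)
      (hdD (Subring.inclusion hRD r * d)) (z k))
  · intro k r d
    exact Subtype.ext (phi_mulr ι j (d : A) (r : A) (hrR r) (hdD d)
      (hdD (d * Subring.inclusion hRD r)) (z k))
  · intro d
    refine Subtype.ext ?_
    have hcoe : ((∑ k, Subring.inclusion hRD
          (⟨phi ι j (d : A) (hdD d) (z k), memR d k⟩ :
            ↥(Subring.centralizer (Set.range j))) *
          (⟨j (v k), memD k⟩ : ↥(Subring.centralizer (Set.range (j.comp ι)))) :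
          ↥(Subring.centralizer (Set.range (j.comp ι)))) : A)
        = ∑ k, phi ι j (d : A) (hdD d) (z k) * j (v k) := by
      push_cast
      rfl
    have hterm : ∀ k, phi ι j (d : A) (hdD d) (z k) * j (v k)
        = phi ι j (d : A) (hdD d) (ract ι ι (v k) (z k)) := by
      intro k
      rw [phi_ract]
    have key : (d : A) = ∑ k, phi ι j (d : A) (hdD d) (z k) * j (v k) :=
      calc (d : A) = phi ι j (d : A) (hdD d) (tmul ι ι 1 1) := by
            rw [phi_tmul, map_one, one_mul, mul_one]
        _ = phi ι j (d : A) (hdD d) (∑ k, ract ι ι (v k) (z k)) := by rw [hsum]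
        _ = ∑ k, phi ι j (d : A) (hdD d) (ract ι ι (v k) (z k)) := map_sum _ _ _
        _ = ∑ k, phi ι j (d : A) (hdD d) (z k) * j (v k) := by simp only [hterm]
    exact key.trans hcoe.symm

end
end
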